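/- Every odd perfect number n satisfies n ≡ 1 (mod 12) or n ≡ 9 (mod 36). -/

import Mathlib

open Nat ArithmeticFunction Finset
open scoped ArithmeticFunction.sigma

/-- Geometric sum with an even number of terms factors through `1 + q`. -/
lemma geom_even_factor (q : ℕ) : ∀ t, ∑ i ∈ Finset.range (2 * t), q ^ i
    = (1 + q) * ∑ j ∈ Finset.range t, q ^ (2 * j) := by
  intro t
  induction t with
  | zero => simp
  | succ t ih =>
    have h1 : 2 * (t + 1) = (2 * t) + 1 + 1 := by ring
    rw [h1, Finset.sum_range_succ, Finset.sum_range_succ, ih, Finset.sum_range_succ]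
    ring

lemma dvd_geom_sum {m q a : ℕ} (hq : m ∣ q + 1) (ha : Odd a) :
    m ∣ ∑ i ∈ Finset.range (a + 1), q ^ i := by
  obtain ⟨t, rfl⟩ := ha
  have h2 : 2 * t + 1 + 1 = 2 * (t + 1) := by ring
  rw [h2, geom_even_factor]
  exact Dvd.dvd.mul_right (by rwa [Nat.add_comm] at hq) _

/-- σ of the p-primary part divides σ n. -/
lemma sigma_primary_dvd {p n : ℕ} (hp : p.Prime) (hn : n ≠ 0) :
    (σ 1) (p ^ n.factorization p) ∣ (σ 1) n := by
  have hco : Nat.Coprime (p ^ n.factorization p) (ordCompl[p] n) :=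
    (Nat.coprime_ordCompl hp hn).pow_left _
  have h := (ArithmeticFunction.isMultiplicative_sigma (k := 1)).map_mul_of_coprime hco
  rw [Nat.ordProj_mul_ordCompl_eq_self n p] at h
  exact ⟨_, h⟩

/-- If all prime-power factors cast to 1 in ZMod m, then n ≡ 1 mod m. -/
lemma cast_eq_one_of_factors {m n : ℕ} (hn : n ≠ 0)
    (h : ∀ p ∈ n.factorization.support, ((p : ZMod m)) ^ (n.factorization p) = 1) :
    (n : ZMod m) = 1 := by
  conv_lhs => rw [← Nat.factorization_prod_pow_eq_self hn]
  rw [Finsupp.prod, Nat.cast_prod]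
  exact Finset.prod_eq_one fun p hp => by rw [Nat.cast_pow]; exact h p hp

theorem odd_perfect_mod (n : ℕ) (hn : 0 < n) (hodd : Odd n)
    (hperf : (∑ d ∈ Nat.divisors n, d) = 2 * n) :
    n % 12 = 1 ∨ n % 36 = 9 := by
  have hn0 : n ≠ 0 := hn.ne'
  have hσ : (σ 1) n = 2 * n := by rw [ArithmeticFunction.sigma_one_apply]; exact hperf
  -- any prime with odd multiplicity: m ∣ q+1 → m ∣ 2n
  have key : ∀ m q : ℕ, q.Prime → m ∣ q + 1 → Odd (n.factorization q) → m ∣ 2 * n := by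
    intro m q hq hm ha
    have h1 : m ∣ (σ 1) (q ^ n.factorization q) := by
      rw [ArithmeticFunction.sigma_one_apply_prime_pow hq]
      exact dvd_geom_sum hm ha
    exact hσ ▸ h1.trans (sigma_primary_dvd hq hn0)
  obtain ⟨w, hw⟩ := hodd
  -- every prime q ≡ 3 mod 4 has even multiplicity
  have O4 : ∀ q : ℕ, q.Prime → q % 4 = 3 → Even (n.factorization q) := by
    intro q hq hq3
    rcases Nat.even_or_odd (n.factorization q) with he | ho
    · exact he
    · exfalso
      have := key 4 q hq (by omega) ho
      omega
  have h4 : n % 4 = 1 := by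
    have hcast : (n : ZMod 4) = ((1 : ℕ) : ZMod 4) := by
      rw [Nat.cast_one]
      apply cast_eq_one_of_factors hn0
      intro p hp
      rw [Nat.support_factorization] at hp
      have hpp : p.Prime := Nat.prime_of_mem_primeFactors hp
      have hpd : p ∣ n := Nat.dvd_of_mem_primeFactors hp
      have hp2 : p ≠ 2 := by
        rintro rfl
        exact absurd (hw ▸ hpd) (by omega)
      have hmod : p % 4 = 1 ∨ p % 4 = 3 := by
        obtain ⟨k, hk⟩ := hpp.odd_of_ne_two hp2
        omega
      rcases hmod with hm1 | hm3
      · have : (p : ZMod 4) = ((1 : ℕ) : ZMod 4) := by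
          rw [ZMod.natCast_eq_natCast_iff']; omega
        rw [this, Nat.cast_one, one_pow]
      · obtain ⟨k, hk⟩ := O4 p hpp hm3
        have hc : (p : ZMod 4) = ((3 : ℕ) : ZMod 4) := by
          rw [ZMod.natCast_eq_natCast_iff']; omega
        rw [hc, hk, pow_add, ← mul_pow]
        have h9 : ((3 : ℕ) : ZMod 4) * ((3 : ℕ) : ZMod 4) = 1 := by decide
        rw [h9, one_pow]
    rw [ZMod.natCast_eq_natCast_iff'] at hcast
    omega
  have h3 : n % 3 = 0 ∨ n % 3 = 1 ∨ n % 3 = 2 := by omega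
  rcases h3 with h30 | h31 | h32
  · -- 3 ∣ n, so 9 ∣ n
    right
    have hd3 : (3 : ℕ) ∣ n := by omega
    have hpos : 0 < n.factorization 3 :=
      Nat.Prime.factorization_pos_of_dvd (by norm_num) hn0 hd3
    have hev : Even (n.factorization 3) := O4 3 (by norm_num) (by norm_num)
    have h2le : 2 ≤ n.factorization 3 := by
      obtain ⟨k, hk⟩ := hev; omega
    have h9 : (9 : ℕ) ∣ n := by
      have : (3 : ℕ) ^ 2 ∣ 3 ^ n.factorization 3 := pow_dvd_pow 3 h2le
      exact (by norm_num : (9:ℕ) = 3 ^ 2) ▸ this.trans (Nat.ordProj_dvd n 3)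
    obtain ⟨c, hc⟩ := h9
    omega
  · left; omega
  · -- impossible: n ≡ 2 mod 3
    exfalso
    have hcast : (n : ZMod 3) = ((1 : ℕ) : ZMod 3) := by
      rw [Nat.cast_one]
      apply cast_eq_one_of_factors hn0
      intro p hp
      rw [Nat.support_factorization] at hp
      have hpp : p.Prime := Nat.prime_of_mem_primeFactors hp
      have hpd : p ∣ n := Nat.dvd_of_mem_primeFactors hp
      have hp3 : p ≠ 3 := by
        rintro rfl
        obtain ⟨c, hc⟩ := hpd
        omega
      have hmod : p % 3 = 1 ∨ p % 3 = 2 := by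
        have := hpp.two_le
        rcases Nat.lt_or_ge p 4 with h | h
        · interval_cases p <;> simp_all
        · have : ¬ (3 ∣ p) := fun hd => by
            have := (hpp.eq_one_or_self_of_dvd 3 hd); omega
          omega
      rcases hmod with hm1 | hm2
      · have : (p : ZMod 3) = ((1 : ℕ) : ZMod 3) := by
          rw [ZMod.natCast_eq_natCast_iff']; omega
        rw [this, Nat.cast_one, one_pow]
      · have hev : Even (n.factorization p) := by
          rcases Nat.even_or_odd (n.factorization p) with he | ho
          · exact he
          · exfalso
            have h3d : (3 : ℕ) ∣ 2 * n := key 3 p hpp (by omega) ho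
            have : (3 : ℕ) ∣ n := by
              rcases (Nat.Prime.dvd_mul (by norm_num)).mp h3d with h | h
              · omega
              · exact h
            omega
        obtain ⟨k, hk⟩ := hev
        have hc : (p : ZMod 3) = ((2 : ℕ) : ZMod 3) := by
          rw [ZMod.natCast_eq_natCast_iff']; omega
        rw [hc, hk, pow_add, ← mul_pow]
        have h9 : ((2 : ℕ) : ZMod 3) * ((2 : ℕ) : ZMod 3) = 1 := by decide
        rw [h9, one_pow]
    rw [ZMod.natCast_eq_natCast_iff'] at hcast
    omega
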